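/- arXiv:math/0001101 — 3 statements merged into one kernel-verified Lean document; each statement's English description precedes it below -/
import Mathlib

section
/- Let K be a subring of ℂ, let ℤ ⊆ Λ ⊆ ℚ be an additive subgroup, and let H be a subgroup of finite index n in a group G. If H fulfills the Atiyah conjecture of order Λ over KH, then G fulfills the Atiyah conjecture of order (1/n)Λ := {λ/n : λ ∈ Λ} over KG. -/
noncomputable section

open scoped ENNReal

instance : Fact ((1 : ℝ≥0∞) ≤ 2) := ⟨one_le_two⟩

/-- The Hilbert space `ℓ²(G)ⁿ`, modeled as square-summable families indexed by
`Fin n × G`. -/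
abbrev L2 (G : Type*) (n : ℕ) : Type _ := lp (fun _ : Fin n × G => ℂ) 2

variable {G : Type*} [Group G]

/-- Convolution of a group ring element `a ∈ ℂG` with a function `x : G → ℂ`:
`(a ⋆ x)(g) = ∑_h a(h) · x(h⁻¹g)` (a finite sum over the support of `a`). -/
def conv (a : MonoidAlgebra ℂ G) (x : G → ℂ) (g : G) : ℂ :=
  ∑ h ∈ a.coeff.support, a.coeff h * x (h⁻¹ * g)

/-- The kernel of the bounded operator `ℓ²(G)ⁿ → ℓ²(G)ᵐ` given by left convolution
with the matrix `A` over the group ring `ℂG`. -/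
def matrixKernel {m n : ℕ} (A : Matrix (Fin m) (Fin n) (MonoidAlgebra ℂ G)) :
    Submodule ℂ (L2 G n) where
  carrier := {x | ∀ (i : Fin m) (g : G),
    ∑ j : Fin n, conv (A i j) (fun g' => x (j, g')) g = 0}
  zero_mem' := by
    intro i g
    simp [conv]
  add_mem' := by
    intro x y hx hy i g
    have hx' := hx i g
    have hy' := hy i g
    simp only [conv, lp.coeFn_add, Pi.add_apply, mul_add, Finset.sum_add_distrib] at *
    rw [hx', hy', add_zero]
  smul_mem' := by
    intro c x hx i g
    have hx' := hx i g
    simp only [conv, lp.coeFn_smul, Pi.smul_apply, smul_eq_mul] at *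
    have : (∑ j : Fin _, ∑ h ∈ (A i j).coeff.support, (A i j).coeff h * (c * x (j, h⁻¹ * g)))
        = c * ∑ j : Fin _, ∑ h ∈ (A i j).coeff.support, (A i j).coeff h * x (j, h⁻¹ * g) := by
      rw [Finset.mul_sum]
      exact Finset.sum_congr rfl fun j _ => by
        rw [Finset.mul_sum]
        exact Finset.sum_congr rfl fun h _ => by ring
    rw [this, hx', mul_zero]

/-- The vector `eᵢ ∈ ℓ²(G)ⁿ` whose `i`-th coordinate is the characteristic function
of the identity element of `G` and whose other coordinates vanish. -/
def stdVec (G : Type*) [Group G] (n : ℕ) (i : Fin n) : L2 G n :=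
  letI : DecidableEq (Fin n × G) := Classical.decEq _
  lp.single 2 (i, (1 : G)) 1

/-- The von Neumann dimension `dim_G(ker A) = ∑ᵢ ⟨P eᵢ, eᵢ⟩` where `P` is the
orthogonal projection of `ℓ²(G)ⁿ` onto the (closed) kernel of `A`. -/
def dimKer {m n : ℕ} (A : Matrix (Fin m) (Fin n) (MonoidAlgebra ℂ G)) : ℝ :=
  letI S := (matrixKernel A).topologicalClosure
  haveI : CompleteSpace S := (Submodule.isClosed_topologicalClosure _).completeSpace_coe
  ∑ i : Fin n,
    (inner ℂ ((S.orthogonalProjectionOnto (stdVec G n i) : L2 G n)) (stdVec G n i) : ℂ).re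

/-- `G` fulfills the Atiyah conjecture of order `Λ` over `KG` (for `K ⊆ ℂ`):
the von Neumann dimension of the kernel of any matrix over `KG` lies in `Λ`. -/
def AtiyahOfOrder (G : Type*) [Group G] (K : Subring ℂ) (Λ : AddSubgroup ℚ) : Prop :=
  ∀ (m n : ℕ) (A : Matrix (Fin m) (Fin n) (MonoidAlgebra ℂ G)),
    (∀ i j g, (A i j).coeff g ∈ K) → ∃ q ∈ Λ, (q : ℝ) = dimKer A

/-- The additive subgroup of `ℚ` generated by the inverses of the orders of the
finite subgroups of `G`. -/
def strongLambda (G : Type*) [Group G] : AddSubgroup ℚ :=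
  AddSubgroup.closure {q : ℚ | ∃ F : Subgroup G, (F : Set G).Finite ∧ q = 1 / (Nat.card F : ℚ)}

/-- The strong Atiyah conjecture for `G` over `KG`. -/
def StrongAtiyah (G : Type*) [Group G] (K : Subring ℂ) : Prop :=
  AtiyahOfOrder G K (strongLambda G)

/-- The strong Atiyah conjecture over `KG` in the torsion-free case: all kernel
dimensions of matrices over `KG` are integers. -/
def StrongAtiyahInt (G : Type*) [Group G] (K : Subring ℂ) : Prop :=
  ∀ (m n : ℕ) (A : Matrix (Fin m) (Fin n) (MonoidAlgebra ℂ G)),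
    (∀ i j g, (A i j).coeff g ∈ K) → ∃ k : ℤ, (k : ℝ) = dimKer A

/-- The rationals, as a subring of `ℂ`. -/
def ratSubring : Subring ℂ := (algebraMap ℚ ℂ).range




/-! ### Auxiliary material for the finite-index proposition -/

section AuxLp

variable {α β : Type*}

lemma memℓp_comp_equiv {f : α → ℂ} (hf : Memℓp f 2) (e : β ≃ α) : Memℓp (f ∘ e) 2 := by
  apply memℓp_gen
  have h2 : (0:ℝ) < (2:ℝ≥0∞).toReal := by norm_num
  have := (memℓp_gen_iff h2).1 hf
  exact (e.summable_iff (f := fun a => ‖f a‖ ^ (2:ℝ≥0∞).toReal)).2 this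

/-- Reindexing isometry of `ℓ²` spaces along an equivalence of index types. -/
noncomputable def lpCongr (e : α ≃ β) : lp (fun _ : α => ℂ) 2 ≃ₗᵢ[ℂ] lp (fun _ : β => ℂ) 2 where
  toFun x := ⟨(x : α → ℂ) ∘ e.symm, memℓp_comp_equiv (lp.memℓp x) e.symm⟩
  invFun y := ⟨(y : β → ℂ) ∘ e, memℓp_comp_equiv (lp.memℓp y) e⟩
  left_inv x := by ext a; simp
  right_inv y := by ext b; simp
  map_add' x y := by ext b; rfl
  map_smul' c x := by ext b; simp [lp.coeFn_smul]
  norm_map' x := by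
    have h2 : (0:ℝ) < (2:ℝ≥0∞).toReal := by norm_num
    rw [lp.norm_eq_tsum_rpow h2, lp.norm_eq_tsum_rpow h2]
    congr 1
    exact e.symm.tsum_eq (fun a => ‖(x : α → ℂ) a‖ ^ (2:ℝ≥0∞).toReal)

@[simp] lemma lpCongr_apply (e : α ≃ β) (x : lp (fun _ : α => ℂ) 2) (b : β) :
    (lpCongr e x : β → ℂ) b = x (e.symm b) := rfl

@[simp] lemma inner_proj_congr {E : Type*} [NormedAddCommGroup E] [InnerProductSpace ℂ E]
    {p q : Submodule ℂ E} (hpq : p = q) [Submodule.HasOrthogonalProjection p] [Submodule.HasOrthogonalProjection q]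
    (v : E) :
    (inner (𝕜 := ℂ) ((Submodule.orthogonalProjectionOnto p v : E)) v)
      = inner (𝕜 := ℂ) ((Submodule.orthogonalProjectionOnto q v : E)) v := by
  subst hpq; rfl

lemma lpCongr_symm_apply (e : α ≃ β) (y : lp (fun _ : β => ℂ) 2) (a : α) :
    ((lpCongr e).symm y : α → ℂ) a = y (e a) := rfl

lemma lpCongr_single [DecidableEq α] [DecidableEq β] (e : α ≃ β) (a : α) (c : ℂ) :
    lpCongr e (lp.single 2 a c) = lp.single 2 (e a) c := by
  apply lp.ext
  funext b
  rw [lpCongr_apply]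
  rcases eq_or_ne b (e a) with rfl | hb
  · simp [lp.single_apply]
  · have : e.symm b ≠ a := fun h => hb (by rw [← h, e.apply_symm_apply])
    simp [lp.single_apply, hb, this]

variable {E F : Type*} [NormedAddCommGroup E] [InnerProductSpace ℂ E]
  [NormedAddCommGroup F] [InnerProductSpace ℂ F]

lemma map_topologicalClosure (U : E ≃ₗᵢ[ℂ] F) (p : Submodule ℂ E) :
    (p.map (U.toLinearEquiv : E →ₗ[ℂ] F)).topologicalClosure
      = p.topologicalClosure.map (U.toLinearEquiv : E →ₗ[ℂ] F) := by
  apply SetLike.ext'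
  rw [Submodule.topologicalClosure_coe, Submodule.map_coe, Submodule.map_coe,
    Submodule.topologicalClosure_coe]
  have := U.toHomeomorph.image_closure (p : Set E)
  simpa using this.symm

lemma inner_orthogonalProjection_map (U : E ≃ₗᵢ[ℂ] F) (p : Submodule ℂ E)
    [Submodule.HasOrthogonalProjection p] (v : E) :
    (inner (𝕜 := ℂ)
        ((Submodule.orthogonalProjectionOnto (p.map (U.toLinearEquiv : E →ₗ[ℂ] F)) (U v) : F)) (U v))
      = inner (𝕜 := ℂ) ((Submodule.orthogonalProjectionOnto p v : E)) v := by
  rw [← Submodule.starProjection_apply, ← Submodule.starProjection_apply,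
    Submodule.starProjection_map_apply, U.symm_apply_apply, U.inner_map_map]

lemma lpCongr_symm (e : α ≃ β) : (lpCongr e).symm = lpCongr e.symm := rfl

end AuxLp

section AuxCoset

/-- Explicit coset-transversal bijection `(G ⧸ H) × H ≃ G`. -/
noncomputable def cosetEquiv (H : Subgroup G) : (G ⧸ H) × H ≃ G where
  toFun p := p.1.out * (p.2 : G)
  invFun g := (QuotientGroup.mk g,
    ⟨((QuotientGroup.mk g : G ⧸ H)).out⁻¹ * g, by
      rw [← QuotientGroup.eq]; exact QuotientGroup.out_eq' _⟩)
  left_inv := by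
    rintro ⟨c, h⟩
    have h1 : (QuotientGroup.mk (c.out * (h : G)) : G ⧸ H) = c := by
      rw [QuotientGroup.mk_mul_of_mem _ h.2, QuotientGroup.out_eq']
    ext
    · exact h1
    · simp [h1]
  right_inv g := by simp

@[simp] lemma cosetEquiv_apply (H : Subgroup G) (c : G ⧸ H) (h : H) :
    cosetEquiv H (c, h) = c.out * (h : G) := rfl

lemma blockEntry_inj (H : Subgroup G) (t s : G ⧸ H) :
    Function.Injective (fun k : H => t.out * (k : G) * s.out⁻¹) := by
  intro k1 k2 h
  ext
  simpa using h

/-- The `(t, s)` block of the element `a ∈ ℂG`, an element of `ℂH`. -/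
noncomputable def blockEntry (H : Subgroup G) (t s : G ⧸ H) (a : MonoidAlgebra ℂ G) :
    MonoidAlgebra ℂ H :=
  MonoidAlgebra.ofCoeff (Finsupp.comapDomain (fun k : H => t.out * (k : G) * s.out⁻¹) a.coeff
    ((blockEntry_inj H t s).injOn))

@[simp] lemma blockEntry_apply (H : Subgroup G) (t s : G ⧸ H) (a : MonoidAlgebra ℂ G) (k : H) :
    (blockEntry H t s a).coeff k = a.coeff (t.out * (k : G) * s.out⁻¹) := rfl

open Finset in
lemma conv_block (H : Subgroup G) [Fintype (G ⧸ H)] (a : MonoidAlgebra ℂ G) (x : G → ℂ)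
    (t : G ⧸ H) (k : H) :
    ∑ s : G ⧸ H, conv (blockEntry H t s a) (fun h : H => x (s.out * h)) k
      = conv a x (t.out * k) := by
  classical
  have key : ∀ s : G ⧸ H,
      conv (blockEntry H t s a) (fun h : H => x (s.out * h)) k
        = ∑ g ∈ a.coeff.support.filter (fun g => (QuotientGroup.mk (g⁻¹ * t.out) : G ⧸ H) = s),
            a.coeff g * x (g⁻¹ * (t.out * k)) := by
    intro s
    unfold conv
    refine Finset.sum_bij' (i := fun (κ : H) _ => t.out * (κ : G) * s.out⁻¹)
      (j := fun g hg => ⟨t.out⁻¹ * g * s.out, ?memH⟩) ?hi ?hj ?left ?right ?val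
    case memH =>
      rw [Finset.mem_filter] at hg
      have h2 : (QuotientGroup.mk (g⁻¹ * t.out) : G ⧸ H) = QuotientGroup.mk s.out := by
        rw [hg.2, QuotientGroup.out_eq']
      have := QuotientGroup.eq.mp h2
      simpa [mul_assoc] using this
    case hi =>
      intro κ hκ
      rw [Finsupp.mem_support_iff] at hκ
      rw [Finset.mem_filter, Finsupp.mem_support_iff]
      refine ⟨hκ, ?_⟩
      have : (t.out * (κ : G) * s.out⁻¹)⁻¹ * t.out = s.out * (κ : G)⁻¹ := by group
      rw [this, QuotientGroup.mk_mul_of_mem _ (inv_mem κ.2), QuotientGroup.out_eq']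
    case hj =>
      intro g hg
      rw [Finset.mem_filter, Finsupp.mem_support_iff] at hg
      rw [Finsupp.mem_support_iff]
      show a.coeff (t.out * ((⟨t.out⁻¹ * g * s.out, _⟩ : H) : G) * s.out⁻¹) ≠ 0
      have : t.out * (t.out⁻¹ * g * s.out) * s.out⁻¹ = g := by group
      simpa [this] using hg.1
    case left =>
      intro κ hκ
      ext
      show t.out⁻¹ * (t.out * (κ : G) * s.out⁻¹) * s.out = (κ : G)
      group
    case right =>
      intro g hg
      show t.out * ((⟨t.out⁻¹ * g * s.out, _⟩ : H) : G) * s.out⁻¹ = g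
      simp only []
      group
    case val =>
      intro κ hκ
      show a.coeff (t.out * (κ : G) * s.out⁻¹) * x (s.out * ((κ⁻¹ * k : H) : G))
          = a.coeff (t.out * (κ : G) * s.out⁻¹) * x ((t.out * (κ : G) * s.out⁻¹)⁻¹ * (t.out * (k : G)))
      congr 2
      have : (t.out * (κ : G) * s.out⁻¹)⁻¹ * (t.out * (k : G)) = s.out * ((κ : G)⁻¹ * k) := by
        group
      rw [this]
      push_cast
      ring_nf
  rw [Finset.sum_congr rfl (fun s _ => key s)]
  rw [Finset.sum_fiberwise a.coeff.support (fun g => (QuotientGroup.mk (g⁻¹ * t.out) : G ⧸ H))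
    (fun g => a.coeff g * x (g⁻¹ * (t.out * k)))]
  rfl

lemma conv_mulRight (a : MonoidAlgebra ℂ G) (y : G → ℂ) (g0 g' : G) :
    conv a (fun g2 => y (g2 * g0)) g' = conv a y (g' * g0) :=
  Finset.sum_congr rfl fun h _ => by
    show a.coeff h * y (h⁻¹ * g' * g0) = a.coeff h * y (h⁻¹ * (g' * g0))
    rw [mul_assoc]

end AuxCoset

/-- **Proposition (finite extensions).** If `H` is a subgroup of index `n` in `G` and
`H` fulfills the Atiyah conjecture of order `Λ ⊆ ℚ` over `KH`, then `G` fulfills the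
Atiyah conjecture of order `(1/n)Λ` over `KG`. -/
theorem atiyah_of_finite_index (G : Type*) [Group G] (K : Subring ℂ)
    (Λ : AddSubgroup ℚ) (hΛ : (1 : ℚ) ∈ Λ)
    (H : Subgroup G) (n : ℕ) (hn : 0 < n) (hidx : H.index = n)
    (h : AtiyahOfOrder H K Λ) :
    AtiyahOfOrder G K
      (Λ.map (AddMonoidHom.mk' (fun q : ℚ => q / (n : ℚ)) (fun a b => add_div a b _))) := by
  intro mA nA A hA
  classical
  -- the quotient is finite with `n` elements
  have hNcard : Nat.card (G ⧸ H) = n := by rw [← Subgroup.index_eq_card]; exact hidx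
  have hne : Nat.card (G ⧸ H) ≠ 0 := by omega
  haveI : Finite (G ⧸ H) := Nat.finite_of_card_ne_zero hne
  letI : Fintype (G ⧸ H) := Fintype.ofFinite _
  have hcard : Fintype.card (G ⧸ H) = n := by rw [← Nat.card_eq_fintype_card, hNcard]
  let qe : Fin n ≃ G ⧸ H := (Fintype.equivFinOfCardEq hcard).symm
  -- the index equivalence `Fin (nA·n) × H ≃ Fin nA × G`
  let eIdx : Fin (nA * n) × H ≃ Fin nA × G :=
    ((finProdFinEquiv.symm).prodCongr (Equiv.refl (H : Type _))).trans
      ((Equiv.prodAssoc (Fin nA) (Fin n) H).trans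
        ((Equiv.refl (Fin nA)).prodCongr ((qe.prodCongr (Equiv.refl (H : Type _))).trans
          (cosetEquiv H))))
  have eIdx_apply : ∀ (p : Fin (nA * n) × (H : Type _)),
      eIdx p = ((finProdFinEquiv.symm p.1).1,
        (qe (finProdFinEquiv.symm p.1).2).out * (p.2 : G)) := fun p => rfl
  let U : L2 (H : Type _) (nA * n) ≃ₗᵢ[ℂ] L2 G nA := lpCongr eIdx
  -- the block matrix over `ℂH`
  let B : Matrix (Fin (mA * n)) (Fin (nA * n)) (MonoidAlgebra ℂ (H : Type _)) := fun i' j' =>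
    blockEntry H (qe (finProdFinEquiv.symm i').2) (qe (finProdFinEquiv.symm j').2)
      (A (finProdFinEquiv.symm i').1 (finProdFinEquiv.symm j').1)
  have hB : ∀ i' j' k, (B i' j').coeff k ∈ K := fun i' j' k => hA _ _ _
  obtain ⟨q, hqΛ, hq⟩ := h (mA * n) (nA * n) B hB
  -- key pointwise identity for the convolution operators
  have key : ∀ (x : L2 G nA) (i : Fin mA) (t : Fin n) (k : (H : Type _)),
      (∑ j' : Fin (nA * n), conv (B (finProdFinEquiv (i, t)) j')
          (fun h' : (H : Type _) => (U.symm x) (j', h')) k)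
        = ∑ j : Fin nA, conv (A i j) (fun g => x (j, g)) ((qe t).out * k) := by
    intro x i t k
    rw [← Equiv.sum_comp finProdFinEquiv
      (fun j' => conv (B (finProdFinEquiv (i, t)) j')
        (fun h' : (H : Type _) => (U.symm x) (j', h')) k)]
    rw [Fintype.sum_prod_type]
    refine Finset.sum_congr rfl fun j _ => ?_
    rw [← conv_block H (A i j) (fun g => x (j, g)) (qe t) k]
    rw [← Equiv.sum_comp qe
      (fun s => conv (blockEntry H (qe t) s (A i j)) (fun h' : (H : Type _) => x (j, s.out * h')) k)]
    refine Finset.sum_congr rfl fun s _ => ?_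
    have hBval : B (finProdFinEquiv (i, t)) (finProdFinEquiv (j, s))
        = blockEntry H (qe t) (qe s) (A i j) := by
      simp only [B, Equiv.symm_apply_apply]
    rw [hBval]
    congr 1
    funext h'
    have : (U.symm x) (finProdFinEquiv (j, s), h') = x (j, (qe s).out * h') := by
      show x (eIdx (finProdFinEquiv (j, s), h')) = _
      rw [eIdx_apply]
      simp
    rw [this]
  -- kernel correspondence
  have kermap : (matrixKernel B).map
      (U.toLinearEquiv : L2 (H : Type _) (nA * n) →ₗ[ℂ] L2 G nA) = matrixKernel A := by
    ext x
    rw [Submodule.mem_map_equiv]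
    constructor
    · intro hx
      intro i g
      set t : Fin n := qe.symm (QuotientGroup.mk g) with ht
      have hqt : qe t = QuotientGroup.mk g := qe.apply_symm_apply _
      have hmem : ((qe t).out)⁻¹ * g ∈ H := by
        rw [← QuotientGroup.eq, hqt]
        exact QuotientGroup.out_eq' _
      have hg : (qe t).out * (⟨((qe t).out)⁻¹ * g, hmem⟩ : H) = g := by
        simp
      have h0 := hx (finProdFinEquiv (i, t)) (⟨((qe t).out)⁻¹ * g, hmem⟩ : H)
      have h1 := key x i t (⟨((qe t).out)⁻¹ * g, hmem⟩ : H)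
      rw [hg] at h1
      exact h1.symm.trans h0
    · intro hx
      intro i' k
      obtain ⟨⟨i, t⟩, rfl⟩ := finProdFinEquiv.surjective i'
      exact (key x i t k).trans (hx i _)
  -- closures
  letI Sb := (matrixKernel B).topologicalClosure
  haveI : CompleteSpace Sb := (Submodule.isClosed_topologicalClosure _).completeSpace_coe
  letI Sa := (matrixKernel A).topologicalClosure
  haveI : CompleteSpace Sa := (Submodule.isClosed_topologicalClosure _).completeSpace_coe
  have hSa : Sa = Sb.map (U.toLinearEquiv : L2 (H : Type _) (nA * n) →ₗ[ℂ] L2 G nA) := by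
    rw [← map_topologicalClosure U (matrixKernel B), kermap]
  -- transport of the projection terms through `U`
  have term_eq : ∀ j' : Fin (nA * n),
      (inner (𝕜 := ℂ)
          ((Submodule.orthogonalProjectionOnto Sb (stdVec (H : Type _) (nA * n) j') : L2 (H : Type _) (nA * n)))
          (stdVec (H : Type _) (nA * n) j'))
        = inner (𝕜 := ℂ)
            ((Submodule.orthogonalProjectionOnto Sa (U (stdVec (H : Type _) (nA * n) j')) : L2 G nA))
            (U (stdVec (H : Type _) (nA * n) j')) := by
    intro j'
    calc (inner (𝕜 := ℂ)
          ((Submodule.orthogonalProjectionOnto Sb (stdVec (H : Type _) (nA * n) j') : L2 (H : Type _) (nA * n)))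
          (stdVec (H : Type _) (nA * n) j'))
        = inner (𝕜 := ℂ)
            ((Submodule.orthogonalProjectionOnto
                ((matrixKernel B).topologicalClosure.map
                  (U.toLinearEquiv : L2 (H : Type _) (nA * n) →ₗ[ℂ] L2 G nA))
                (U (stdVec (H : Type _) (nA * n) j')) : L2 G nA))
            (U (stdVec (H : Type _) (nA * n) j')) :=
          (inner_orthogonalProjection_map U Sb (stdVec (H : Type _) (nA * n) j')).symm
      _ = inner (𝕜 := ℂ)
            ((Submodule.orthogonalProjectionOnto Sa (U (stdVec (H : Type _) (nA * n) j')) : L2 G nA))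
            (U (stdVec (H : Type _) (nA * n) j')) :=
          (inner_proj_congr hSa _).symm
  -- the standard vectors transport to single vectors
  have hUstd : ∀ j' : Fin (nA * n),
      U (stdVec (H : Type _) (nA * n) j') = lp.single 2 (eIdx (j', (1 : H))) 1 := by
    intro j'
    have h1 : stdVec (H : Type _) (nA * n) j' = lp.single 2 (j', (1 : H)) 1 := by
      apply lp.ext
      funext b
      rcases eq_or_ne b (j', (1 : H)) with rfl | hb
      · simp [stdVec, lp.single_apply]
      · simp [stdVec, lp.single_apply, hb]
    rw [h1]
    exact lpCongr_single eIdx (j', (1 : H)) 1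
  -- right-translation invariance of the kernel
  have hker_sub : ∀ (g0 : G) (y : L2 G nA), y ∈ matrixKernel A →
      lpCongr ((Equiv.refl (Fin nA)).prodCongr (Equiv.mulRight g0)) y ∈ matrixKernel A := by
    intro g0 y hy i g'
    show ∑ j : Fin nA, conv (A i j)
        (fun g2 => (lpCongr ((Equiv.refl (Fin nA)).prodCongr (Equiv.mulRight g0)) y) (j, g2)) g'
          = 0
    have step : ∀ j : Fin nA, conv (A i j)
        (fun g2 => (lpCongr ((Equiv.refl (Fin nA)).prodCongr (Equiv.mulRight g0)) y) (j, g2)) g'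
          = conv (A i j) (fun g2 => y (j, g2)) (g' * g0⁻¹) := by
      intro j
      have hfun : (fun g2 =>
            (lpCongr ((Equiv.refl (Fin nA)).prodCongr (Equiv.mulRight g0)) y) (j, g2))
          = fun g2 => (fun g => y (j, g)) (g2 * g0⁻¹) := by
        funext g2
        rw [lpCongr_apply]
        simp
      rw [hfun]
      exact conv_mulRight (A i j) (fun g => y (j, g)) g0⁻¹ g'
    rw [Finset.sum_congr rfl fun j _ => step j]
    exact hy i (g' * g0⁻¹)
  have hker_map : ∀ g0 : G,
      (matrixKernel A).map
        (((lpCongr ((Equiv.refl (Fin nA)).prodCongr (Equiv.mulRight g0))).toLinearEquiv)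
          : L2 G nA →ₗ[ℂ] L2 G nA) = matrixKernel A := by
    intro g0
    ext x
    rw [Submodule.mem_map_equiv]
    constructor
    · intro hx
      have h2 := hker_sub g0 _ hx
      have h3 : lpCongr ((Equiv.refl (Fin nA)).prodCongr (Equiv.mulRight g0))
          ((lpCongr ((Equiv.refl (Fin nA)).prodCongr (Equiv.mulRight g0))).toLinearEquiv.symm x)
            = x := by
        exact (lpCongr ((Equiv.refl (Fin nA)).prodCongr (Equiv.mulRight g0))).apply_symm_apply x
      rwa [h3] at h2
    · intro hx
      have h2 := hker_sub g0⁻¹ x hx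
      have h3 : lpCongr ((Equiv.refl (Fin nA)).prodCongr (Equiv.mulRight g0⁻¹)) x
          = (lpCongr ((Equiv.refl (Fin nA)).prodCongr (Equiv.mulRight g0))).toLinearEquiv.symm x := by
        apply lp.ext
        funext b
        obtain ⟨b1, b2⟩ := b
        rw [lpCongr_apply]
        show x ((b1, b2).1, (b1, b2).2 * g0⁻¹⁻¹)
          = ((lpCongr ((Equiv.refl (Fin nA)).prodCongr (Equiv.mulRight g0))).symm x) (b1, b2)
        rw [lpCongr_symm_apply]
        simp
      rwa [h3] at h2
  have hSa_map : ∀ g0 : G,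
      Sa.map (((lpCongr ((Equiv.refl (Fin nA)).prodCongr (Equiv.mulRight g0))).toLinearEquiv)
        : L2 G nA →ₗ[ℂ] L2 G nA) = Sa := by
    intro g0
    rw [← map_topologicalClosure (lpCongr ((Equiv.refl (Fin nA)).prodCongr (Equiv.mulRight g0)))
      (matrixKernel A), hker_map g0]
  have hstdA : ∀ j : Fin nA, stdVec G nA j = lp.single 2 (j, (1 : G)) 1 := by
    intro j
    apply lp.ext
    funext b
    rcases eq_or_ne b (j, (1 : G)) with rfl | hb
    · simp [stdVec, lp.single_apply]
    · simp [stdVec, lp.single_apply, hb]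
  have trans_inv : ∀ (j : Fin nA) (g0 : G),
      (inner (𝕜 := ℂ) ((Submodule.orthogonalProjectionOnto Sa (lp.single 2 (j, g0) (1 : ℂ)) : L2 G nA))
          (lp.single 2 (j, g0) (1 : ℂ)))
        = inner (𝕜 := ℂ) ((Submodule.orthogonalProjectionOnto Sa (stdVec G nA j) : L2 G nA)) (stdVec G nA j) := by
    intro j g0
    have hsingle : (lpCongr ((Equiv.refl (Fin nA)).prodCongr (Equiv.mulRight g0))) (stdVec G nA j)
        = lp.single 2 (j, g0) 1 := by
      rw [hstdA j, lpCongr_single]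
      norm_num
    calc (inner (𝕜 := ℂ) ((Submodule.orthogonalProjectionOnto Sa (lp.single 2 (j, g0) (1 : ℂ)) : L2 G nA))
          (lp.single 2 (j, g0) (1 : ℂ)))
        = inner (𝕜 := ℂ)
            ((Submodule.orthogonalProjectionOnto Sa
              ((lpCongr ((Equiv.refl (Fin nA)).prodCongr (Equiv.mulRight g0))) (stdVec G nA j))
                : L2 G nA))
            ((lpCongr ((Equiv.refl (Fin nA)).prodCongr (Equiv.mulRight g0))) (stdVec G nA j)) := by
          rw [hsingle]
      _ = inner (𝕜 := ℂ)
            ((Submodule.orthogonalProjectionOnto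
              (Sa.map (((lpCongr ((Equiv.refl (Fin nA)).prodCongr
                (Equiv.mulRight g0))).toLinearEquiv) : L2 G nA →ₗ[ℂ] L2 G nA))
              ((lpCongr ((Equiv.refl (Fin nA)).prodCongr (Equiv.mulRight g0))) (stdVec G nA j))
                : L2 G nA))
            ((lpCongr ((Equiv.refl (Fin nA)).prodCongr (Equiv.mulRight g0))) (stdVec G nA j)) :=
          (inner_proj_congr (hSa_map g0) _).symm
      _ = inner (𝕜 := ℂ) ((Submodule.orthogonalProjectionOnto Sa (stdVec G nA j) : L2 G nA)) (stdVec G nA j) :=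
          inner_orthogonalProjection_map (lpCongr ((Equiv.refl (Fin nA)).prodCongr
            (Equiv.mulRight g0))) Sa (stdVec G nA j)
  -- assembling the dimension count
  have hdimB : dimKer B = ∑ j' : Fin (nA * n),
      (inner (𝕜 := ℂ)
        ((Submodule.orthogonalProjectionOnto Sb (stdVec (H : Type _) (nA * n) j') : L2 (H : Type _) (nA * n)))
        (stdVec (H : Type _) (nA * n) j') : ℂ).re := rfl
  have hdimA : dimKer A = ∑ j : Fin nA,
      (inner (𝕜 := ℂ) ((Submodule.orthogonalProjectionOnto Sa (stdVec G nA j) : L2 G nA))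
        (stdVec G nA j) : ℂ).re := rfl
  have hterm : ∀ j' : Fin (nA * n),
      (inner (𝕜 := ℂ)
          ((Submodule.orthogonalProjectionOnto Sb (stdVec (H : Type _) (nA * n) j') : L2 (H : Type _) (nA * n)))
          (stdVec (H : Type _) (nA * n) j') : ℂ)
        = inner (𝕜 := ℂ)
            ((Submodule.orthogonalProjectionOnto Sa (stdVec G nA (finProdFinEquiv.symm j').1) : L2 G nA))
            (stdVec G nA (finProdFinEquiv.symm j').1) := by
    intro j'
    rw [term_eq j', hUstd j']
    have he : eIdx (j', (1 : H))
        = ((finProdFinEquiv.symm j').1, (qe (finProdFinEquiv.symm j').2).out) := by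
      rw [eIdx_apply]
      simp
    rw [he]
    exact trans_inv _ _
  have hsum : dimKer B = (n : ℝ) * dimKer A := by
    rw [hdimB, hdimA]
    have heq := Fintype.sum_equiv finProdFinEquiv
      (fun p : Fin nA × Fin n =>
        (inner (𝕜 := ℂ) ((Submodule.orthogonalProjectionOnto Sa (stdVec G nA p.1) : L2 G nA))
          (stdVec G nA p.1) : ℂ).re)
      (fun j' : Fin (nA * n) =>
        (inner (𝕜 := ℂ)
          ((Submodule.orthogonalProjectionOnto Sb (stdVec (H : Type _) (nA * n) j') : L2 (H : Type _) (nA * n)))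
          (stdVec (H : Type _) (nA * n) j') : ℂ).re)
      (fun p => by
        have h5 := congrArg Complex.re (hterm (finProdFinEquiv p))
        simp only [Equiv.symm_apply_apply] at h5
        exact h5.symm)
    rw [← heq, Fintype.sum_prod_type]
    have hinner : ∀ j : Fin nA, (∑ _s : Fin n,
        (inner (𝕜 := ℂ) ((Submodule.orthogonalProjectionOnto Sa (stdVec G nA j) : L2 G nA))
          (stdVec G nA j) : ℂ).re)
        = (n : ℝ) * (inner (𝕜 := ℂ) ((Submodule.orthogonalProjectionOnto Sa (stdVec G nA j) : L2 G nA))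
            (stdVec G nA j) : ℂ).re := by
      intro j
      rw [Finset.sum_const, Finset.card_univ, Fintype.card_fin, nsmul_eq_mul]
    rw [Finset.sum_congr rfl fun j _ => hinner j, ← Finset.mul_sum]
  -- conclusion
  refine ⟨q / (n : ℚ), AddSubgroup.mem_map.mpr ⟨q, hqΛ, rfl⟩, ?_⟩
  have hn' : ((n : ℚ) : ℝ) ≠ 0 := by
    push_cast
    exact_mod_cast hn.ne'
  have hq2 : (q : ℝ) = (n : ℝ) * dimKer A := by rw [hq, hsum]
  push_cast
  rw [hq2]
  field_simp
end
end

section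
/- Let K be a subring of ℂ and ℤ ⊆ Λ ⊆ ℚ an additive subgroup. If a group G fulfills the Atiyah conjecture of order Λ over KG, then every subgroup U of G fulfills the Atiyah conjecture of order Λ over KU. -/
noncomputable section

open scoped ENNReal

variable {G : Type*} [Group G]

namespace AtiyahAux

variable (U : Subgroup G) (n : ℕ)

def emb : Fin n × U → Fin n × G := fun k => (k.1, (k.2 : G))

lemma emb_inj : Function.Injective (emb U n) := by
  rintro ⟨i, u⟩ ⟨j, v⟩ h
  simp only [emb, Prod.mk.injEq] at h
  exact Prod.ext h.1 (Subtype.ext h.2)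

open Classical in
def extFun (x : L2 U n) : Fin n × G → ℂ := fun k =>
  if h : k.2 ∈ U then x (k.1, ⟨k.2, h⟩) else 0

variable {U n}

lemma extFun_emb (x : L2 U n) (k : Fin n × U) : extFun U n x (emb U n k) = x k := by
  rcases k with ⟨j, u⟩
  simp [extFun, emb]

lemma extFun_of_not_mem (x : L2 U n) {k : Fin n × G} (hk : k.2 ∉ U) :
    extFun U n x k = 0 := dif_neg hk

lemma not_mem_range_emb {k : Fin n × G} (hk : k ∉ Set.range (emb U n)) : k.2 ∉ U := by
  intro h
  exact hk ⟨(k.1, ⟨k.2, h⟩), rfl⟩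

lemma two_toReal_pos : (0:ℝ) < (2 : ℝ≥0∞).toReal := by norm_num

lemma memℓp_extFun (x : L2 U n) : Memℓp (extFun U n x) 2 := by
  have hx : Summable fun k => ‖x k‖ ^ (2 : ℝ≥0∞).toReal :=
    (memℓp_gen_iff two_toReal_pos).1 (lp.memℓp x)
  refine memℓp_gen ?_
  refine ((emb_inj U n).summable_iff ?_).1 ?_
  · intro k hk
    rw [extFun_of_not_mem x (not_mem_range_emb hk), norm_zero,
      Real.zero_rpow (ne_of_gt two_toReal_pos)]
  · refine hx.congr fun k => ?_
    simp only [Function.comp_apply, extFun_emb]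

lemma memℓp_restFun (y : L2 G n) : Memℓp (fun k => y (emb U n k)) 2 := by
  have hy : Summable fun k => ‖y k‖ ^ (2 : ℝ≥0∞).toReal :=
    (memℓp_gen_iff two_toReal_pos).1 (lp.memℓp y)
  exact memℓp_gen (hy.comp_injective (emb_inj U n))

variable (U n)

def extL : L2 U n →ₗ[ℂ] L2 G n where
  toFun x := ⟨extFun U n x, memℓp_extFun x⟩
  map_add' x y := by
    apply lp.ext
    funext k
    have h1 : ⇑(x + y) = ⇑x + ⇑y := lp.coeFn_add x y
    show extFun U n (x + y) k = extFun U n x k + extFun U n y k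
    simp only [extFun, h1, Pi.add_apply]
    split <;> simp
  map_smul' c x := by
    apply lp.ext
    funext k
    have h1 : ⇑(c • x) = c • ⇑x := lp.coeFn_smul c x
    show extFun U n (c • x) k = c • extFun U n x k
    simp only [extFun, h1, Pi.smul_apply, smul_eq_mul]
    split <;> simp

def restL : L2 G n →ₗ[ℂ] L2 U n where
  toFun y := ⟨fun k => y (emb U n k), memℓp_restFun y⟩
  map_add' x y := by
    apply lp.ext
    funext k
    have h1 : ⇑(x + y) = ⇑x + ⇑y := lp.coeFn_add x y
    show (x + y) (emb U n k) = x (emb U n k) + y (emb U n k)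
    rw [h1]; rfl
  map_smul' c x := by
    apply lp.ext
    funext k
    have h1 : ⇑(c • x) = c • ⇑x := lp.coeFn_smul c x
    show (c • x) (emb U n k) = c • x (emb U n k)
    rw [h1]; rfl

variable {U n}

lemma extL_apply (x : L2 U n) (k : Fin n × G) : (extL U n x) k = extFun U n x k := rfl

lemma restL_apply (y : L2 G n) (k : Fin n × U) : (restL U n y) k = y (emb U n k) := rfl

lemma tsum_ext (x : L2 U n) :
    (∑' (k : Fin n × G), ‖(extL U n x) k‖ ^ (2:ℝ≥0∞).toReal)
      = ∑' (k : Fin n × U), ‖x k‖ ^ (2:ℝ≥0∞).toReal := by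
  rw [← (emb_inj U n).tsum_eq (f := fun k => ‖(extL U n x) k‖ ^ (2:ℝ≥0∞).toReal) ?_]
  · exact tsum_congr fun k => by rw [extL_apply, extFun_emb]
  · intro k hk
    by_contra hr
    rw [Function.mem_support, extL_apply, extFun_of_not_mem x (not_mem_range_emb hr),
      norm_zero, Real.zero_rpow (ne_of_gt two_toReal_pos)] at hk
    exact hk rfl

lemma norm_ext_le (x : L2 U n) : ‖extL U n x‖ ≤ ‖x‖ := by
  rw [← Real.rpow_le_rpow_iff (norm_nonneg _) (norm_nonneg _) two_toReal_pos,
    lp.norm_rpow_eq_tsum two_toReal_pos, lp.norm_rpow_eq_tsum two_toReal_pos, tsum_ext]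

lemma norm_rest_le (y : L2 G n) : ‖restL U n y‖ ≤ ‖y‖ := by
  rw [← Real.rpow_le_rpow_iff (norm_nonneg _) (norm_nonneg _) two_toReal_pos,
    lp.norm_rpow_eq_tsum two_toReal_pos, lp.norm_rpow_eq_tsum two_toReal_pos]
  refine Summable.tsum_le_tsum_of_inj (emb U n) (emb_inj U n)
    (fun c _ => Real.rpow_nonneg (norm_nonneg _) _) (fun k => le_of_eq rfl)
    ?_ ((memℓp_gen_iff two_toReal_pos).1 (lp.memℓp y))
  exact ((memℓp_gen_iff two_toReal_pos).1 (lp.memℓp y)).comp_injective (emb_inj U n)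

variable (U n)

def extCLM : L2 U n →L[ℂ] L2 G n :=
  (extL U n).mkContinuous 1 (fun x => by simpa using norm_ext_le x)

def restCLM : L2 G n →L[ℂ] L2 U n :=
  (restL U n).mkContinuous 1 (fun y => by simpa using norm_rest_le y)

variable {U n}

lemma extCLM_apply (x : L2 U n) (k : Fin n × G) : (extCLM U n x) k = extFun U n x k := rfl

lemma restCLM_apply (y : L2 G n) (k : Fin n × U) : (restCLM U n y) k = y (emb U n k) := rfl

lemma inner_ext (z : L2 U n) (y : L2 G n) :
    (inner ℂ (extCLM U n z) y : ℂ) = inner ℂ z (restCLM U n y) := by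
  rw [lp.inner_eq_tsum, lp.inner_eq_tsum]
  rw [← (emb_inj U n).tsum_eq (f := fun k => (inner ℂ ((extCLM U n z) k) (y k) : ℂ)) ?_]
  · refine tsum_congr fun k => ?_
    rw [extCLM_apply, extFun_emb, restCLM_apply]
  · intro k hk
    by_contra hr
    rw [Function.mem_support, extCLM_apply, extFun_of_not_mem z (not_mem_range_emb hr),
      inner_zero_left] at hk
    exact hk rfl

lemma rest_ext (x : L2 U n) : restCLM U n (extCLM U n x) = x := by
  apply lp.ext
  funext k
  rw [restCLM_apply, extCLM_apply, extFun_emb]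

end AtiyahAux

namespace AtiyahAux

variable {U : Subgroup G} {n : ℕ}

lemma conv_mapDomain (a : MonoidAlgebra ℂ U) (F : G → ℂ) (f : U → ℂ)
    (hF : ∀ u : U, F u = f u) (u : U) :
    conv (MonoidAlgebra.ofCoeff (Finsupp.mapDomain Subtype.val a.coeff)) F u = conv a f u := by
  classical
  unfold conv
  rw [MonoidAlgebra.coeff_ofCoeff]
  rw [Finsupp.mapDomain_support_of_injective Subtype.val_injective,
    Finset.sum_image (fun x _ y _ h => Subtype.val_injective h)]
  refine Finset.sum_congr rfl fun h _ => ?_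
  rw [Finsupp.mapDomain_apply Subtype.val_injective]
  congr 1
  have hc : ((h : G)⁻¹ * (u : G)) = ((h⁻¹ * u : U) : G) := by norm_cast
  rw [hc, hF]

lemma conv_mapDomain_zero (a : MonoidAlgebra ℂ U) (F : G → ℂ)
    (hF : ∀ g ∉ U, F g = 0) {g : G} (hg : g ∉ U) :
    conv (MonoidAlgebra.ofCoeff (Finsupp.mapDomain Subtype.val a.coeff)) F g = 0 := by
  refine Finset.sum_eq_zero fun h hh => ?_
  have hhU : h ∈ U := by
    by_contra hhU
    rw [MonoidAlgebra.coeff_ofCoeff] at hh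
    rw [Finsupp.mem_support_iff, Finsupp.mapDomain_notin_range] at hh
    · exact hh rfl
    · rintro ⟨u, rfl⟩; exact hhU u.2
  have hm : h⁻¹ * g ∉ U := by
    intro hm
    exact hg (by simpa using U.mul_mem hhU hm)
  rw [hF _ hm, mul_zero]

variable {m : ℕ}

lemma ext_mem_kernel {A : Matrix (Fin m) (Fin n) (MonoidAlgebra ℂ U)} {x : L2 U n}
    (hx : x ∈ matrixKernel A) :
    extCLM U n x ∈
      matrixKernel (fun i j => MonoidAlgebra.ofCoeff (Finsupp.mapDomain Subtype.val (A i j).coeff) :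
        Matrix (Fin m) (Fin n) (MonoidAlgebra ℂ G)) := by
  intro i g
  by_cases hg : g ∈ U
  · have hx' := hx i ⟨g, hg⟩
    rw [← hx']
    refine Finset.sum_congr rfl fun j _ => ?_
    exact conv_mapDomain (A i j) _ (fun u => x (j, u))
      (fun u => by rw [extCLM_apply]; exact extFun_emb x (j, u)) ⟨g, hg⟩
  · refine Finset.sum_eq_zero fun j _ => ?_
    exact conv_mapDomain_zero (A i j) _
      (fun g' hg' => by rw [extCLM_apply]; exact extFun_of_not_mem x hg') hg

lemma rest_mem_kernel {A : Matrix (Fin m) (Fin n) (MonoidAlgebra ℂ U)} {y : L2 G n}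
    (hy : y ∈ matrixKernel (fun i j => MonoidAlgebra.ofCoeff (Finsupp.mapDomain Subtype.val (A i j).coeff) :
        Matrix (Fin m) (Fin n) (MonoidAlgebra ℂ G))) :
    restCLM U n y ∈ matrixKernel A := by
  intro i u
  have hy' := hy i (u : G)
  rw [← hy']
  refine Finset.sum_congr rfl fun j _ => ?_
  exact (conv_mapDomain (A i j) (fun g => y (j, g)) _ (fun u' => rfl) u).symm

open Classical in
lemma stdVec_apply {H : Type*} [Group H] {n : ℕ} (i : Fin n) (k : Fin n × H) :
    stdVec H n i k = if k = (i, 1) then 1 else 0 := by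
  letI : DecidableEq (Fin n × H) := Classical.decEq _
  unfold stdVec
  rw [lp.single_apply]
  split_ifs with h
  · subst h; exact Pi.single_eq_same _ _
  · exact Pi.single_eq_of_ne h _

lemma ext_stdVec (i : Fin n) : extCLM U n (stdVec U n i) = stdVec G n i := by
  classical
  apply lp.ext
  funext k
  rcases k with ⟨j, g⟩
  rw [extCLM_apply, stdVec_apply]
  by_cases hg : g ∈ U
  · rw [show extFun U n (stdVec U n i) (j, g) = (stdVec U n i) (j, ⟨g, hg⟩) from dif_pos hg,
      stdVec_apply]
    have hiff : ((j, (⟨g, hg⟩ : U)) = (i, (1 : U))) ↔ ((j, g) = (i, (1 : G))) := by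
      constructor
      · intro hc
        have h1 : j = i := congrArg Prod.fst hc
        have h2 : (g : G) = 1 := congrArg (fun p : Fin n × U => (p.2 : G)) hc
        exact Prod.ext h1 h2
      · intro hc
        have h1 : j = i := congrArg Prod.fst hc
        have h2 : (⟨g, hg⟩ : U) = 1 := Subtype.ext (congrArg Prod.snd hc)
        exact Prod.ext h1 h2
    by_cases h : (j, g) = (i, (1 : G))
    · rw [if_pos (hiff.2 h), if_pos h]
    · rw [if_neg (fun hc => h (hiff.1 hc)), if_neg h]
  · rw [extFun_of_not_mem _ hg, if_neg]
    intro hc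
    have h2 : g = 1 := congrArg Prod.snd hc
    exact hg (by rw [h2]; exact U.one_mem)

end AtiyahAux

namespace AtiyahAux

variable {U : Subgroup G}

lemma dimKer_map {m n : ℕ} (A : Matrix (Fin m) (Fin n) (MonoidAlgebra ℂ U)) :
    dimKer (fun i j => MonoidAlgebra.ofCoeff (Finsupp.mapDomain Subtype.val (A i j).coeff) :
      Matrix (Fin m) (Fin n) (MonoidAlgebra ℂ G)) = dimKer A := by
  unfold dimKer
  haveI h1 : CompleteSpace ((matrixKernel A).topologicalClosure :
      Submodule ℂ (L2 U n)) :=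
    (Submodule.isClosed_topologicalClosure _).completeSpace_coe
  haveI h2 : CompleteSpace ((matrixKernel (fun i j => MonoidAlgebra.ofCoeff (Finsupp.mapDomain Subtype.val (A i j).coeff) :
      Matrix (Fin m) (Fin n) (MonoidAlgebra ℂ G))).topologicalClosure :
      Submodule ℂ (L2 G n)) :=
    (Submodule.isClosed_topologicalClosure _).completeSpace_coe
  refine Finset.sum_congr rfl fun i _ => ?_
  set SU := (matrixKernel A).topologicalClosure with hSU
  set SG := (matrixKernel (fun i j => MonoidAlgebra.ofCoeff (Finsupp.mapDomain Subtype.val (A i j).coeff) :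
      Matrix (Fin m) (Fin n) (MonoidAlgebra ℂ G))).topologicalClosure with hSG
  have hext : SU ≤ SG.comap (extCLM U n).toLinearMap := by
    refine Submodule.topologicalClosure_minimal _ ?_ ?_
    · intro x hx
      exact Submodule.le_topologicalClosure _ (ext_mem_kernel hx)
    · exact (Submodule.isClosed_topologicalClosure _).preimage (extCLM U n).continuous
  have hrest : SG ≤ SU.comap (restCLM U n).toLinearMap := by
    refine Submodule.topologicalClosure_minimal _ ?_ ?_
    · intro y hy
      exact Submodule.le_topologicalClosure _ (rest_mem_kernel hy)
    · exact (Submodule.isClosed_topologicalClosure _).preimage (restCLM U n).continuous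
  have key : ((SG.orthogonalProjectionOnto (stdVec G n i) : L2 G n))
      = extCLM U n (SU.orthogonalProjectionOnto (stdVec U n i) : L2 U n) := by
    refine Submodule.eq_starProjection_of_mem_of_inner_eq_zero (K := SG) ?_ ?_
    · exact hext (SU.orthogonalProjectionOnto (stdVec U n i)).2
    · intro w hw
      rw [← ext_stdVec i, ← map_sub, inner_ext]
      exact Submodule.starProjection_inner_eq_zero (K := SU) (stdVec U n i) _ (hrest hw)
  have rest_std : restCLM U n (stdVec G n i) = stdVec U n i := by
    rw [← ext_stdVec i, rest_ext]
  rw [key, inner_ext, rest_std]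

end AtiyahAux


/-- **Proposition (subgroups).** If `G` fulfills the Atiyah conjecture of order
`Λ ⊆ ℚ` over `KG` and `U ≤ G`, then `U` fulfills the Atiyah conjecture of order `Λ`
over `KU`. -/
theorem atiyah_of_subgroup (G : Type*) [Group G] (K : Subring ℂ)
    (Λ : AddSubgroup ℚ) (hΛ : (1 : ℚ) ∈ Λ)
    (h : AtiyahOfOrder G K Λ) (U : Subgroup G) :
    AtiyahOfOrder U K Λ := by
  intro m n A hA
  have hA' : ∀ i j g, (Finsupp.mapDomain Subtype.val (A i j).coeff) g ∈ K := by
    intro i j g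
    by_cases hg : g ∈ Set.range (Subtype.val : U → G)
    · obtain ⟨u, rfl⟩ := hg
      rw [Finsupp.mapDomain_apply Subtype.val_injective]
      exact hA i j u
    · rw [Finsupp.mapDomain_notin_range _ _ hg]
      exact K.zero_mem
  obtain ⟨q, hq, hq'⟩ := h m n (fun i j => MonoidAlgebra.ofCoeff (Finsupp.mapDomain Subtype.val (A i j).coeff)) hA'
  exact ⟨q, hq, hq'.trans (AtiyahAux.dimKer_map A)⟩
end
end

section
/- Let K be a subring of ℂ. Let G be the directed union of a family of subgroups {G_i}_{i∈I} (i.e. the family is directed under inclusion and G = ∪_{i∈I} G_i), and assume each G_i fulfills the Atiyah conjecture of order Λ_i over KG_i, where ℤ ⊆ Λ_i ⊆ ℚ are additive subgroups. Then G fulfills the Atiyah conjecture of order Λ over KG, where Λ is the additive subgroup of ℚ generated by ∪_{i∈I} Λ_i. -/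
noncomputable section

open scoped ENNReal

variable {G : Type*} [Group G]

/-! ### Auxiliary machinery: extension by zero and restriction on `ℓ²` spaces -/

section ExtRes

local notation "⟪" x ", " y "⟫" => @inner ℂ _ _ x y

variable {α β : Type*}

lemma summable_norm_rpow_two (x : lp (fun _ : α => ℂ) 2) :
    Summable fun a => ‖x a‖ ^ (2 : ℝ≥0∞).toReal :=
  (memℓp_gen_iff (by norm_num)).1 (lp.memℓp x)

lemma memℓp_extend {f : α → β} (hf : Function.Injective f) (x : lp (fun _ : α => ℂ) 2) :
    Memℓp (Function.extend f (⇑x) 0) (2 : ℝ≥0∞) := by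
  apply memℓp_gen
  have hpt : (fun b => ‖Function.extend f (⇑x) 0 b‖ ^ (2 : ℝ≥0∞).toReal)
      = Function.extend f (fun a => ‖x a‖ ^ (2 : ℝ≥0∞).toReal) 0 := by
    funext b
    rcases em (∃ a, f a = b) with ⟨a, rfl⟩ | hb
    · rw [hf.extend_apply, hf.extend_apply]
    · rw [Function.extend_apply' _ _ _ hb, Function.extend_apply' _ _ _ hb]
      simp only [Pi.zero_apply, norm_zero]
      rw [Real.zero_rpow (by norm_num)]
  rw [hpt]
  exact (summable_extend_zero hf).2 (summable_norm_rpow_two x)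

/-- Extension by zero along an injective map of index types, as a linear map
between `ℓ²` spaces. -/
def extLM {f : α → β} (hf : Function.Injective f) :
    lp (fun _ : α => ℂ) 2 →ₗ[ℂ] lp (fun _ : β => ℂ) 2 where
  toFun x := ⟨Function.extend f (⇑x) 0, memℓp_extend hf x⟩
  map_add' x y := by
    apply lp.ext
    rw [lp.coeFn_add ⟨_, memℓp_extend hf x⟩ ⟨_, memℓp_extend hf y⟩]
    funext b
    show Function.extend f (⇑(x + y)) 0 b
      = Function.extend f (⇑x) 0 b + Function.extend f (⇑y) 0 b
    rcases em (∃ a, f a = b) with ⟨a, rfl⟩ | hb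
    · rw [hf.extend_apply, hf.extend_apply, hf.extend_apply, lp.coeFn_add, Pi.add_apply]
    · rw [Function.extend_apply' _ _ _ hb, Function.extend_apply' _ _ _ hb,
        Function.extend_apply' _ _ _ hb]
      simp
  map_smul' c x := by
    apply lp.ext
    rw [RingHom.id_apply, lp.coeFn_smul c ⟨_, memℓp_extend hf x⟩]
    funext b
    show Function.extend f (⇑(c • x)) 0 b = c • Function.extend f (⇑x) 0 b
    rcases em (∃ a, f a = b) with ⟨a, rfl⟩ | hb
    · rw [hf.extend_apply, hf.extend_apply, lp.coeFn_smul, Pi.smul_apply]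
    · rw [Function.extend_apply' _ _ _ hb, Function.extend_apply' _ _ _ hb]
      simp

@[simp] lemma extLM_apply {f : α → β} (hf : Function.Injective f)
    (x : lp (fun _ : α => ℂ) 2) (b : β) :
    (extLM hf x : ∀ _ : β, ℂ) b = Function.extend f (⇑x) 0 b := rfl

lemma extLM_apply_of_mem {f : α → β} (hf : Function.Injective f)
    (x : lp (fun _ : α => ℂ) 2) (a : α) :
    (extLM hf x : ∀ _ : β, ℂ) (f a) = x a := by
  rw [extLM_apply, hf.extend_apply]

lemma extLM_apply_of_not_mem {f : α → β} (hf : Function.Injective f)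
    (x : lp (fun _ : α => ℂ) 2) {b : β} (hb : ¬∃ a, f a = b) :
    (extLM hf x : ∀ _ : β, ℂ) b = 0 := by
  rw [extLM_apply, Function.extend_apply' _ _ _ hb]
  rfl

/-- Restriction along an injective map of index types, as an element-level map
between `ℓ²` spaces. -/
def resL2 {f : α → β} (hf : Function.Injective f) (y : lp (fun _ : β => ℂ) 2) :
    lp (fun _ : α => ℂ) 2 :=
  ⟨fun a => y (f a), by
    apply memℓp_gen
    exact (summable_norm_rpow_two y).comp_injective hf⟩

@[simp] lemma resL2_apply {f : α → β} (hf : Function.Injective f)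
    (y : lp (fun _ : β => ℂ) 2) (a : α) : (resL2 hf y : ∀ _ : α, ℂ) a = y (f a) := rfl

/-- The fundamental adjoint-type identity: `⟪extend w, y⟫ = ⟪w, restrict y⟫`. -/
lemma inner_extLM_left {f : α → β} (hf : Function.Injective f)
    (w : lp (fun _ : α => ℂ) 2) (y : lp (fun _ : β => ℂ) 2) :
    ⟪extLM hf w, y⟫ = ⟪w, resL2 hf y⟫ := by
  rw [lp.inner_eq_tsum, lp.inner_eq_tsum]
  have hsupp : Function.support (fun b => ⟪(extLM hf w : ∀ _ : β, ℂ) b, y b⟫) ⊆ Set.range f := by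
    intro b hb
    by_contra hbr
    apply hb
    show ⟪(extLM hf w : ∀ _ : β, ℂ) b, y b⟫ = 0
    rw [extLM_apply_of_not_mem hf w (by simpa [Set.range] using hbr)]
    simp
  rw [← hf.tsum_eq hsupp]
  congr 1
  funext a
  rw [extLM_apply_of_mem hf w a, resL2_apply]

lemma inner_extLM_extLM {f : α → β} (hf : Function.Injective f)
    (w v : lp (fun _ : α => ℂ) 2) :
    ⟪extLM hf w, extLM hf v⟫ = ⟪w, v⟫ := by
  rw [inner_extLM_left hf]
  congr 1
  apply lp.ext
  funext a
  rw [resL2_apply, extLM_apply_of_mem]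

/-- Extension by zero as a linear isometry. -/
def extIso {f : α → β} (hf : Function.Injective f) :
    lp (fun _ : α => ℂ) 2 →ₗᵢ[ℂ] lp (fun _ : β => ℂ) 2 :=
  (extLM hf).isometryOfInner fun x y => inner_extLM_extLM hf x y

@[simp] lemma extIso_apply {f : α → β} (hf : Function.Injective f)
    (x : lp (fun _ : α => ℂ) 2) : extIso hf x = extLM hf x := rfl

end ExtRes

/-! ### Restricting a matrix over `ℂG` with supports in `H ≤ G` to a matrix over `ℂH` -/

section Subgroup

local notation "⟪" x ", " y "⟫" => @inner ℂ _ _ x y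

variable {G : Type*} [Group G]

/-- The inclusion `Fin n × H → Fin n × G`. -/
def incl (n : ℕ) (H : Subgroup G) : Fin n × H → Fin n × G := fun p => (p.1, (p.2 : G))

lemma incl_inj (n : ℕ) (H : Subgroup G) : Function.Injective (incl n H) := by
  rintro ⟨i, a⟩ ⟨j, b⟩ hab
  simp only [incl, Prod.mk.injEq] at hab
  exact Prod.ext_iff.mpr ⟨hab.1, Subtype.ext hab.2⟩

/-- A matrix over `ℂG` all of whose entries are supported in a subgroup `H`,
viewed as a matrix over `ℂH`. -/
def subMat (H : Subgroup G) {m n : ℕ} (A : Matrix (Fin m) (Fin n) (MonoidAlgebra ℂ G)) :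
    Matrix (Fin m) (Fin n) (MonoidAlgebra ℂ H) := fun i j =>
  MonoidAlgebra.ofCoeff (Finsupp.subtypeDomain (· ∈ H) (A i j).coeff)

lemma subMat_apply (H : Subgroup G) {m n : ℕ}
    (A : Matrix (Fin m) (Fin n) (MonoidAlgebra ℂ G)) (i : Fin m) (j : Fin n) (g : H) :
    (subMat H A i j).coeff g = (A i j).coeff (g : G) := rfl

lemma subMat_support (H : Subgroup G) {m n : ℕ}
    [DecidablePred (· ∈ H)]
    (A : Matrix (Fin m) (Fin n) (MonoidAlgebra ℂ G)) (i : Fin m) (j : Fin n) :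
    (subMat H A i j).coeff.support = (A i j).coeff.support.subtype (· ∈ H) :=
  Finsupp.support_subtypeDomain

lemma res_mem_kernel {H : Subgroup G} {m n : ℕ}
    {A : Matrix (Fin m) (Fin n) (MonoidAlgebra ℂ G)}
    (hsupp : ∀ i j g, (A i j).coeff g ≠ 0 → g ∈ H) {y : L2 G n}
    (hy : y ∈ matrixKernel A) :
    resL2 (incl_inj n H) y ∈ matrixKernel (subMat H A) := by
  intro i gh
  have key : ∀ j : Fin n,
      conv (subMat H A i j) (fun g' => resL2 (incl_inj n H) y (j, g')) gh
        = conv (A i j) (fun g' => y (j, g')) (gh : G) := by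
    intro j
    letI : DecidablePred (· ∈ H) := Classical.decPred _
    show ∑ h ∈ (subMat H A i j).coeff.support, (subMat H A i j).coeff h
          * resL2 (incl_inj n H) y (j, h⁻¹ * gh)
        = ∑ h ∈ (A i j).coeff.support, (A i j).coeff h * y (j, h⁻¹ * (gh : G))
    rw [subMat_support]
    refine Eq.trans (Finset.sum_congr rfl fun h _ => ?_)
      (Finset.sum_subtype_of_mem
        (fun g => (A i j).coeff g * y (j, g⁻¹ * (gh : G)))
        (fun g hg => hsupp i j g (Finsupp.mem_support_iff.mp hg)))
    rw [subMat_apply, resL2_apply]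
    rfl
  rw [Finset.sum_congr rfl (fun j _ => key j)]
  exact hy i (gh : G)

lemma ext_mem_kernel {H : Subgroup G} {m n : ℕ}
    {A : Matrix (Fin m) (Fin n) (MonoidAlgebra ℂ G)}
    (hsupp : ∀ i j g, (A i j).coeff g ≠ 0 → g ∈ H) {w : L2 H n}
    (hw : w ∈ matrixKernel (subMat H A)) :
    extLM (incl_inj n H) w ∈ matrixKernel A := by
  intro i g
  by_cases hg : g ∈ H
  · have key : ∀ j : Fin n,
        conv (A i j) (fun g' => extLM (incl_inj n H) w (j, g')) g
          = conv (subMat H A i j) (fun g' => w (j, g')) ⟨g, hg⟩ := by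
      intro j
      letI : DecidablePred (· ∈ H) := Classical.decPred _
      show ∑ h ∈ (A i j).coeff.support, (A i j).coeff h * extLM (incl_inj n H) w (j, h⁻¹ * g)
          = ∑ h ∈ (subMat H A i j).coeff.support, (subMat H A i j).coeff h * w (j, h⁻¹ * ⟨g, hg⟩)
      rw [subMat_support]
      rw [← Finset.sum_subtype_of_mem
        (fun g' => (A i j).coeff g' * extLM (incl_inj n H) w (j, g'⁻¹ * g))
        (fun g' hg' => hsupp i j g' (Finsupp.mem_support_iff.mp hg'))]
      refine Finset.sum_congr rfl fun h _ => ?_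
      rw [subMat_apply]
      congr 1
      have hmem : (h : G)⁻¹ * g ∈ H := H.mul_mem (H.inv_mem h.2) hg
      have : ((h : G)⁻¹ * g) = ((h⁻¹ * (⟨g, hg⟩ : H) : H) : G) := rfl
      have h2 : (j, (h : G)⁻¹ * g) = incl n H (j, h⁻¹ * (⟨g, hg⟩ : H)) := rfl
      rw [h2]
      exact extLM_apply_of_mem (incl_inj n H) w _
    rw [Finset.sum_congr rfl (fun j _ => key j)]
    exact hw i ⟨g, hg⟩
  · refine Finset.sum_eq_zero fun j _ => Finset.sum_eq_zero fun h hh => ?_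
    have hhH : h ∈ H := hsupp i j h (Finsupp.mem_support_iff.mp hh)
    have hnot : ¬∃ a : Fin n × H, incl n H a = (j, h⁻¹ * g) := by
      rintro ⟨⟨j', x⟩, hx⟩
      apply hg
      have : h⁻¹ * g ∈ H := by
        simp only [incl, Prod.mk.injEq] at hx
        rw [← hx.2]; exact x.2
      have := H.mul_mem hhH this
      rwa [mul_inv_cancel_left] at this
    show (A i j).coeff h * (extLM (incl_inj n H) w : ∀ _ : Fin n × G, ℂ) (j, h⁻¹ * g) = 0
    rw [extLM_apply_of_not_mem _ _ hnot, mul_zero]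

lemma res_stdVec (H : Subgroup G) (n : ℕ) (i : Fin n) :
    resL2 (incl_inj n H) (stdVec G n i) = stdVec (↥H) n i := by
  letI : DecidableEq (Fin n × ↥H) := Classical.decEq _
  letI : DecidableEq (Fin n × G) := Classical.decEq _
  apply lp.ext
  funext p
  obtain ⟨j, x⟩ := p
  rw [resL2_apply]
  show stdVec G n i (j, (x : G)) = stdVec (↥H) n i (j, x)
  unfold stdVec
  by_cases hx : ((j, x) : Fin n × ↥H) = (i, 1)
  · obtain ⟨h1, h2⟩ := Prod.ext_iff.mp hx
    simp only at h1 h2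
    subst h1; subst h2
    show (lp.single 2 ((j, (1 : G))) (1 : ℂ) : ∀ _ : Fin n × G, ℂ) (j, (1 : G))
      = (lp.single 2 ((j, (1 : ↥H))) (1 : ℂ) : ∀ _ : Fin n × ↥H, ℂ) (j, (1 : ↥H))
    rw [lp.single_apply_self, lp.single_apply_self]
  · have hxG : ((j, (x : G)) : Fin n × G) ≠ (i, (1 : G)) := by
      intro hc
      apply hx
      obtain ⟨h1, h2⟩ := Prod.ext_iff.mp hc
      simp only at h1 h2
      exact Prod.ext_iff.mpr ⟨h1, Subtype.ext h2⟩
    rw [lp.single_apply_ne 2 (i, (1 : G)) 1 hxG, lp.single_apply_ne 2 (i, (1 : ↥H)) 1 hx]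

lemma ext_stdVec (H : Subgroup G) (n : ℕ) (i : Fin n) :
    extLM (incl_inj n H) (stdVec (↥H) n i) = stdVec G n i := by
  letI : DecidableEq (Fin n × ↥H) := Classical.decEq _
  letI : DecidableEq (Fin n × G) := Classical.decEq _
  apply lp.ext
  funext p
  obtain ⟨j, g⟩ := p
  show (extLM (incl_inj n H) (stdVec (↥H) n i) : ∀ _ : Fin n × G, ℂ) (j, g)
    = stdVec G n i (j, g)
  by_cases hg : g ∈ H
  · have h2 : ((j, g) : Fin n × G) = incl n H (j, ⟨g, hg⟩) := rfl
    rw [h2, extLM_apply_of_mem]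
    show stdVec (↥H) n i (j, ⟨g, hg⟩) = stdVec G n i (incl n H (j, ⟨g, hg⟩))
    unfold stdVec
    by_cases hx : ((j, (⟨g, hg⟩ : ↥H)) : Fin n × ↥H) = (i, 1)
    · obtain ⟨h1, h2'⟩ := Prod.ext_iff.mp hx
      simp only at h1 h2'
      subst h1
      have hg1 : g = 1 := by simpa [Subtype.ext_iff] using h2'
      subst hg1
      show (lp.single 2 ((j, (1 : ↥H))) (1 : ℂ) : ∀ _ : Fin n × ↥H, ℂ) (j, (1 : ↥H))
        = (lp.single 2 ((j, (1 : G))) (1 : ℂ) : ∀ _ : Fin n × G, ℂ) (j, (1 : G))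
      rw [lp.single_apply_self, lp.single_apply_self]
    · have hxG : (incl n H (j, ⟨g, hg⟩)) ≠ (i, (1 : G)) := by
        intro hc
        apply hx
        obtain ⟨h1, h2'⟩ := Prod.ext_iff.mp hc
        simp only [incl] at h1 h2'
        exact Prod.ext_iff.mpr ⟨h1, Subtype.ext h2'⟩
      rw [lp.single_apply_ne 2 (i, (1 : ↥H)) 1 hx, lp.single_apply_ne 2 (i, (1 : G)) 1 hxG]
  · have hnot : ¬∃ a : Fin n × ↥H, incl n H a = (j, g) := by
      rintro ⟨⟨j', x⟩, hx⟩
      apply hg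
      obtain ⟨h1, h2⟩ := Prod.ext_iff.mp hx
      simp only [incl] at h2
      rw [← h2]; exact x.2
    rw [extLM_apply_of_not_mem _ _ hnot]
    symm
    show stdVec G n i (j, g) = 0
    unfold stdVec
    refine lp.single_apply_ne 2 (i, (1 : G)) 1 fun hc => hg ?_
    obtain ⟨h1, h2⟩ := Prod.ext_iff.mp hc
    simp only at h2
    rw [h2]; exact H.one_mem

/-- The key step: if all entries of `A` are supported in the subgroup `H`, then the
von Neumann dimension of the kernel computed over `H` agrees with the one over `G`. -/
lemma dimKer_subMat {m n : ℕ} (H : Subgroup G)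
    (A : Matrix (Fin m) (Fin n) (MonoidAlgebra ℂ G))
    (hsupp : ∀ i j g, (A i j).coeff g ≠ 0 → g ∈ H) :
    dimKer (subMat H A) = dimKer A := by
  set SH := (matrixKernel (subMat H A)).topologicalClosure with hSH
  set SG := (matrixKernel A).topologicalClosure with hSG
  haveI : CompleteSpace SH := (Submodule.isClosed_topologicalClosure _).completeSpace_coe
  haveI : CompleteSpace SG := (Submodule.isClosed_topologicalClosure _).completeSpace_coe
  unfold dimKer
  refine Finset.sum_congr rfl fun i _ => ?_
  set eH := stdVec (↥H) n i with heH
  set eG := stdVec G n i with heG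
  set w : L2 (↥H) n := (SH.orthogonalProjectionOnto eH : L2 (↥H) n) with hw
  have hproj : (SG.orthogonalProjectionOnto eG : L2 G n) = extLM (incl_inj n H) w := by
    rw [← Submodule.starProjection_apply]
    apply Submodule.eq_starProjection_of_mem_of_inner_eq_zero
    · -- extLM w ∈ SG
      have hle : matrixKernel (subMat H A)
          ≤ SG.comap ((extIso (incl_inj n H)).toContinuousLinearMap :
              L2 (↥H) n →ₗ[ℂ] L2 G n) := by
        intro z hz
        exact (matrixKernel A).le_topologicalClosure (ext_mem_kernel hsupp hz)
      have hclosed : IsClosed ((SG.comap ((extIso (incl_inj n H)).toContinuousLinearMap :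
          L2 (↥H) n →ₗ[ℂ] L2 G n)) : Set (L2 (↥H) n)) :=
        (Submodule.isClosed_topologicalClosure _).preimage
          (extIso (incl_inj n H)).continuous
      have := Submodule.topologicalClosure_minimal _ hle hclosed
        (SetLike.coe_mem (SH.orthogonalProjectionOnto eH))
      exact this
    · intro z hz
      have hsub : eG - extLM (incl_inj n H) w = extLM (incl_inj n H) (eH - w) := by
        rw [map_sub, ext_stdVec]
      rw [hsub]
      have hker : matrixKernel A
          ≤ LinearMap.ker (innerSL ℂ (extLM (incl_inj n H) (eH - w)) : L2 G n →ₗ[ℂ] ℂ) := by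
        intro y hy
        rw [LinearMap.mem_ker]
        show ⟪extLM (incl_inj n H) (eH - w), y⟫ = 0
        rw [inner_extLM_left]
        have hry : resL2 (incl_inj n H) y ∈ SH :=
          (matrixKernel (subMat H A)).le_topologicalClosure (res_mem_kernel hsupp hy)
        exact Submodule.inner_left_of_mem_orthogonal hry
          (Submodule.sub_starProjection_mem_orthogonal (K := SH) eH)
      have := Submodule.topologicalClosure_minimal _ hker
        (ContinuousLinearMap.isClosed_ker _) hz
      exact this
  have : ⟪(SG.orthogonalProjectionOnto eG : L2 G n), eG⟫
      = ⟪(SH.orthogonalProjectionOnto eH : L2 (↥H) n), eH⟫ := by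
    rw [hproj, inner_extLM_left, res_stdVec]
  rw [this]

end Subgroup

/-- **Proposition (directed unions).** Let `G` be the directed union of subgroups
`G i`, each fulfilling the Atiyah conjecture of order `Λ i` over `K(G i)`. Then `G`
fulfills the Atiyah conjecture over `KG` of order the additive subgroup of `ℚ`
generated by the union of the `Λ i`. -/
theorem atiyah_of_directed_union (G : Type*) [Group G] (K : Subring ℂ)
    (ι : Type*) (Gi : ι → Subgroup G)
    (hdir : ∀ i j : ι, ∃ k, Gi i ≤ Gi k ∧ Gi j ≤ Gi k)
    (hcover : ∀ g : G, ∃ i, g ∈ Gi i)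
    (Λ : ι → AddSubgroup ℚ) (hΛ : ∀ i, (1 : ℚ) ∈ Λ i)
    (h : ∀ i, AtiyahOfOrder (Gi i) K (Λ i)) :
    AtiyahOfOrder G K (AddSubgroup.closure (⋃ i, (Λ i : Set ℚ))) := by
  clear hΛ
  intro m n A hA
  classical
  obtain ⟨i₀, -⟩ := hcover 1
  have key : ∀ s : Finset G, ∃ k, ∀ g ∈ s, g ∈ Gi k := by
    intro s
    induction s using Finset.induction_on with
    | empty => exact ⟨i₀, by simp⟩
    | @insert a s ha ih =>
      obtain ⟨k, hk⟩ := ih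
      obtain ⟨k', hk'⟩ := hcover a
      obtain ⟨k'', h1, h2⟩ := hdir k' k
      refine ⟨k'', fun g hg => ?_⟩
      rcases Finset.mem_insert.mp hg with rfl | hg
      · exact h1 hk'
      · exact h2 (hk g hg)
  obtain ⟨k, hk⟩ := key ((Finset.univ : Finset (Fin m)).biUnion fun i =>
    (Finset.univ : Finset (Fin n)).biUnion fun j => (A i j).coeff.support)
  have hsupp : ∀ i j g, (A i j).coeff g ≠ 0 → g ∈ Gi k := by
    intro i j g hg
    refine hk g ?_
    simp only [Finset.mem_biUnion, Finset.mem_univ, true_and]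
    exact ⟨i, j, Finsupp.mem_support_iff.mpr hg⟩
  obtain ⟨q, hq, hq'⟩ := h k m n (subMat (Gi k) A) (fun i j g => by
    rw [subMat_apply]; exact hA i j (g : G))
  refine ⟨q, ?_, ?_⟩
  · exact AddSubgroup.subset_closure (Set.mem_iUnion.mpr ⟨k, hq⟩)
  · rw [hq', dimKer_subMat (Gi k) A hsupp]
end
end
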